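/- arXiv:1506.07573 — 2 statements merged into one kernel-verified Lean document; each statement's English description precedes it below -/
import Mathlib

section
/- In a rooted tree in which every node is either an internal node (with at least one child) of type 0,1,2,3, subject to the constraint that a node of type 0 or 1 never has exactly one child whose type lies in {0,1}, the number N of internal nodes of type 1 satisfies N ≤ (2n − 1)/3, where n is the total number of nodes. -/
/-- Finite rooted trees with nodes labelled by a type in `{0,1,2,3}`. -/
inductive LTree where
  | node : Fin 4 → List LTree → LTree

namespace LTree

/-- Total number of nodes. -/
def size : LTree → ℕ
  | .node _ ts => 1 + (ts.attach.map (fun t => size t.1)).sum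
decreasing_by simp only [LTree.node.sizeOf_spec]; exact Nat.lt_of_lt_of_le (List.sizeOf_lt_of_mem t.2) (by omega)

/-- The type label of the root node. -/
def rootType : LTree → Fin 4
  | .node ty _ => ty

/-- Number of internal (at least one child) nodes of type 1. -/
def countInternal1 : LTree → ℕ
  | .node ty ts =>
      (if ty = 1 ∧ ts.isEmpty = false then 1 else 0) +
        (ts.attach.map (fun t => countInternal1 t.1)).sum
decreasing_by simp only [LTree.node.sizeOf_spec]; exact Nat.lt_of_lt_of_le (List.sizeOf_lt_of_mem t.2) (by omega)

/-- Admissibility: a node of type 0 or 1 never has exactly one child whose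
type lies in `{0,1}`. -/
def admissible : LTree → Prop
  | .node ty ts =>
      (∀ t ∈ ts.attach, admissible t.1) ∧
      ((ty = 0 ∨ ty = 1) →
        ¬ ∃ t, ts = [t] ∧ (rootType t = 0 ∨ rootType t = 1))
decreasing_by simp only [LTree.node.sizeOf_spec]; exact Nat.lt_of_lt_of_le (List.sizeOf_lt_of_mem t.2) (by omega)

end LTree

lemma sum_helper (l : List LTree)
    (h : ∀ t ∈ l, 3 * t.countInternal1 + 1 ≤ 2 * t.size) :
    3 * (l.map LTree.countInternal1).sum + l.length ≤ 2 * (l.map LTree.size).sum := by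
  induction l with
  | nil => simp
  | cons a l ih =>
    simp only [List.map_cons, List.sum_cons, List.length_cons]
    have h1 := h a (by simp)
    have h2 := ih (fun t ht => h t (by simp [ht]))
    omega

theorem aux_bound : ∀ (θ : LTree), θ.admissible →
    (3 * θ.countInternal1 + 1 ≤ 2 * θ.size) ∧
    ((θ.rootType = 2 ∨ θ.rootType = 3) → 3 * θ.countInternal1 + 2 ≤ 2 * θ.size)
  | .node ty ts => fun h => by
    rw [LTree.admissible] at h
    obtain ⟨hadm, hsingle⟩ := h
    have ih : ∀ t ∈ ts, (3 * t.countInternal1 + 1 ≤ 2 * t.size) ∧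
        ((t.rootType = 2 ∨ t.rootType = 3) → 3 * t.countInternal1 + 2 ≤ 2 * t.size) := by
      intro t ht
      exact aux_bound t (hadm ⟨t, ht⟩ (List.mem_attach _ _))
    have hsum : 3 * (ts.map LTree.countInternal1).sum + ts.length
        ≤ 2 * (ts.map LTree.size).sum :=
      sum_helper ts (fun t ht => (ih t ht).1)
    have hc : LTree.countInternal1 (.node ty ts) =
        (if ty = 1 ∧ ts.isEmpty = false then 1 else 0) + (ts.map LTree.countInternal1).sum := by
      rw [LTree.countInternal1]; simp [List.attach_map_val]
    have hs : LTree.size (.node ty ts) = 1 + (ts.map LTree.size).sum := by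
      rw [LTree.size]; simp [List.attach_map_val]
    have hrt : LTree.rootType (.node ty ts) = ty := rfl
    rw [hc, hs, hrt]
    rcases ts with _ | ⟨t, _ | ⟨b, rest⟩⟩
    · simp
    · by_cases h1 : ty = 1
      · subst h1
        have hne : LTree.rootType t = 2 ∨ LTree.rootType t = 3 := by
          have hforb := hsingle (Or.inr rfl)
          have h01 : ¬ (LTree.rootType t = 0 ∨ LTree.rootType t = 1) := by
            intro hh; exact hforb ⟨t, rfl, hh⟩
          push_neg at h01
          obtain ⟨a, b⟩ := h01
          omega
        have hstr := (ih t (by simp)).2 hne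
        simp only [List.map_cons, List.map_nil, List.sum_cons, List.sum_nil]
        refine ⟨by simp; omega, fun hty => by omega⟩
      · simp only [List.map_cons, List.map_nil, List.sum_cons, List.sum_nil,
          List.length_cons, List.length_nil] at hsum ⊢
        simp only [h1, false_and, if_false]
        exact ⟨by omega, fun hty => by omega⟩
    · simp only [List.map_cons, List.sum_cons, List.length_cons] at hsum ⊢
      by_cases h1 : ty = 1 <;> simp only [h1, List.isEmpty_cons, true_and, if_true,
        false_and, if_false] <;> exact ⟨by omega, fun hty => by omega⟩
decreasing_by simp only [LTree.node.sizeOf_spec]; exact Nat.lt_of_lt_of_le (List.sizeOf_lt_of_mem ht) (by omega)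

/-- Lemma 2.1: the number of internal nodes of type 1 in an admissible tree
with `n` nodes is at most `(2n-1)/3`. -/
theorem internal_type1_bound (θ : LTree) (hθ : θ.admissible) :
    3 * θ.countInternal1 ≤ 2 * θ.size - 1 := by
  have := (aux_bound θ hθ).1
  omega
end

section
/- The bound N_i¹(θ) ≤ (2n−1)/3 for the number of internal nodes of type 1 is optimal: for every k ≥ 1 there exists an admissible labelled rooted tree with n = 2^k − 1 + 2^{k−1} nodes in which the number of internal nodes of type 1 equals 2^k − 1 = (2n − 1)/3. -/
def B : ℕ → LTree
  | 0 => LTree.node 1 [LTree.node 2 []]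
  | n + 1 => LTree.node 1 [B n, B n]

lemma B_size (m : ℕ) : (B m).size = 2 ^ (m + 1) - 1 + 2 ^ m := by
  induction m with
  | zero => simp [B, LTree.size]
  | succ n ih =>
    simp only [B, LTree.size, List.attach, List.attachWith, List.pmap, List.map, List.sum_cons,
      List.sum_nil, ih]
    have h1 : 1 ≤ 2 ^ (n + 1) := Nat.one_le_two_pow
    ring_nf
    omega

lemma B_count (m : ℕ) : (B m).countInternal1 = 2 ^ (m + 1) - 1 := by
  induction m with
  | zero => simp [B, LTree.countInternal1]
  | succ n ih =>
    simp only [B, LTree.countInternal1, List.attach, List.attachWith, List.pmap, List.map,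
      List.sum_cons, List.sum_nil, ih, List.isEmpty]
    have h1 : 1 ≤ 2 ^ (n + 1) := Nat.one_le_two_pow
    have h2 : 2 ^ (n + 1 + 1) = 2 * 2 ^ (n + 1) := by ring
    simp only [and_self, if_true]
    omega

lemma B_adm (m : ℕ) : (B m).admissible := by
  induction m with
  | zero =>
    rw [B, LTree.admissible]
    refine ⟨?_, ?_⟩
    · intro t ht
      simp at ht
      subst ht
      rw [LTree.admissible]
      simp
    · rintro - ⟨t, ht, hty⟩
      simp at ht
      subst ht
      simp [LTree.rootType] at hty
  | succ n ih =>
    rw [B, LTree.admissible]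
    refine ⟨?_, ?_⟩
    · intro t ht
      simp at ht
      subst ht
      exact ih
    · rintro - ⟨t, ht, -⟩
      simp at ht

/-- Optimality of Lemma 2.1: for every `k ≥ 1` there is an admissible tree
with `n = 2^k - 1 + 2^(k-1)` nodes whose number of internal type-1 nodes
equals `2^k - 1 = (2n-1)/3`. -/
theorem internal_type1_bound_optimal (k : ℕ) (hk : 1 ≤ k) :
    ∃ θ : LTree, θ.admissible ∧
      θ.size = 2 ^ k - 1 + 2 ^ (k - 1) ∧
      θ.countInternal1 = 2 ^ k - 1 ∧
      3 * θ.countInternal1 = 2 * θ.size - 1 := by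
  have hkk : k - 1 + 1 = k := by omega
  have hs := B_size (k - 1)
  have hc := B_count (k - 1)
  rw [hkk] at hs hc
  have h1 : 1 ≤ 2 ^ k := Nat.one_le_two_pow
  have h2 : 2 ^ k = 2 * 2 ^ (k - 1) := by rw [← pow_succ', hkk]
  exact ⟨B (k - 1), B_adm _, by omega, by omega, by omega⟩
end
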